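/- Any optimal solution w* of the soft-margin SVM objective min_w E[max(0, 1 - y wᵀx)] + (λ/2)‖w‖₂² over the distribution D satisfies w*_i = w*_j for all i, j ∈ {2,...,d+1}. -/

import Mathlib

open MeasureTheory ProbabilityTheory Real
open scoped ENNReal NNReal

noncomputable def signM : Measure ℝ :=
  (1/2 : ℝ≥0∞) • Measure.dirac (-1) + (1/2 : ℝ≥0∞) • Measure.dirac 1

noncomputable def flipM (p : ℝ) : Measure ℝ :=
  ENNReal.ofReal p • Measure.dirac 1 + ENNReal.ofReal (1 - p) • Measure.dirac (-1)

noncomputable def dataD (p η : ℝ) (d : ℕ) : Measure ((ℝ × (Fin d → ℝ)) × ℝ) :=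
  signM.bind fun y =>
    (((flipM p).map (fun s => s * y)).prod
      (Measure.pi fun _ : Fin d => gaussianReal (η * y) 1)).map (fun x => (x, y))

noncomputable def muY (p η : ℝ) (d : ℕ) (y : ℝ) : Measure (ℝ × (Fin d → ℝ)) :=
  ((flipM p).map (fun s => s * y)).prod (Measure.pi fun _ : Fin d => gaussianReal (η * y) 1)

noncomputable def nuY (p η : ℝ) (d : ℕ) (y : ℝ) : Measure ((ℝ × (Fin d → ℝ)) × ℝ) :=
  (muY p η d y).map (fun x => (x, y))

lemma dataD_eq (p η : ℝ) (d : ℕ) :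
    dataD p η d = (1/2 : ℝ≥0∞) • nuY p η d (-1) + (1/2 : ℝ≥0∞) • nuY p η d 1 := by
  classical
  set g : ℝ → Measure ((ℝ × (Fin d → ℝ)) × ℝ) :=
    fun y => if y = 1 then nuY p η d 1 else nuY p η d (-1) with hgdef
  have hg : Measurable g := by
    apply Measurable.ite _ measurable_const measurable_const
    exact MeasurableSet.congr (measurableSet_singleton (1:ℝ)) (by ext y; simp)
  have hae : (fun y => nuY p η d y) =ᵐ[signM] g := by
    rw [Filter.EventuallyEq, ae_iff]
    refine measure_mono_null (fun y hy => ?_) (?_ : signM ({-1, 1} : Set ℝ)ᶜ = 0)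
    · simp only [Set.mem_compl_iff, Set.mem_insert_iff, Set.mem_singleton_iff]
      intro hmem
      apply hy
      rcases hmem with h | h <;> subst h <;> simp [hgdef, nuY] <;> norm_num
    · have h1 : (-1 : ℝ) ∈ ({-1, 1} : Set ℝ) := by simp
      have h2 : (1 : ℝ) ∈ ({-1, 1} : Set ℝ) := by simp
      simp [signM, Measure.dirac_apply, Set.indicator, h1, h2]
  have hbind : dataD p η d = signM.bind g := by
    show Measure.join (Measure.map _ signM) = Measure.join (Measure.map _ signM)
    congr 1
    exact Measure.map_congr hae
  rw [hbind]
  ext s hs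
  have hcoe : Measurable fun y => g y s := (Measure.measurable_coe hs).comp hg
  rw [Measure.bind_apply hs hg.aemeasurable]
  have hsign : signM = (1/2 : ℝ≥0∞) • Measure.dirac (-1) + (1/2 : ℝ≥0∞) • Measure.dirac 1 := rfl
  rw [hsign, lintegral_add_measure, lintegral_smul_measure, lintegral_smul_measure,
    lintegral_dirac' _ hcoe, lintegral_dirac' _ hcoe]
  have hg1 : g 1 = nuY p η d 1 := if_pos rfl
  have hgm1 : g (-1) = nuY p η d (-1) := if_neg (by norm_num)
  rw [hg1, hgm1]
  simp [Measure.add_apply, Measure.smul_apply, smul_eq_mul]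

lemma isProb_flipM {p : ℝ} (hp0 : 0 ≤ p) (hp1 : p ≤ 1) : IsProbabilityMeasure (flipM p) := by
  constructor
  have h1 : (1 : ℝ) = p + (1 - p) := by ring
  simp only [flipM, Measure.add_apply, Measure.smul_apply, smul_eq_mul, measure_univ, mul_one]
  rw [← ENNReal.ofReal_add hp0 (by linarith), ← ENNReal.ofReal_one]
  congr 1
  ring

lemma isProb_muY {p : ℝ} (η : ℝ) {d : ℕ} (y : ℝ) (hp0 : 0 ≤ p) (hp1 : p ≤ 1) :
    IsProbabilityMeasure (muY p η d y) := by
  have := isProb_flipM hp0 hp1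
  have h2 : IsProbabilityMeasure ((flipM p).map (fun s => s * y)) :=
    Measure.isProbabilityMeasure_map (measurable_id.mul_const y).aemeasurable
  unfold muY
  infer_instance

lemma pi_map_eval {d : ℕ} (μ : Fin d → Measure ℝ) [∀ i, IsProbabilityMeasure (μ i)] (i : Fin d) :
    (Measure.pi μ).map (fun f => f i) = μ i := by
  classical
  ext s hs
  rw [Measure.map_apply (measurable_pi_apply i) hs]
  have hpre : (fun f : Fin d → ℝ => f i) ⁻¹' s
      = Set.pi Set.univ (Function.update (fun _ => Set.univ) i s) := Set.eval_preimage
  rw [hpre, Measure.pi_pi]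
  rw [Finset.prod_eq_single i (fun j _ hj => by
    rw [Function.update_of_ne hj]; exact measure_univ) (fun h => absurd (Finset.mem_univ i) h)]
  rw [Function.update_self]

lemma integrable_dirac'' {f : ℝ → ℝ} (hf : Measurable f) (a : ℝ) :
    Integrable f (Measure.dirac a) := by
  refine ⟨hf.aestronglyMeasurable, ?_⟩
  unfold HasFiniteIntegral
  rw [lintegral_dirac' a (by measurability)]
  exact ENNReal.coe_lt_top

lemma integrable_abs_gaussianReal (m : ℝ) :
    Integrable (fun x : ℝ => |x|) (gaussianReal m 1) := by
  rw [gaussianReal_of_var_ne_zero m one_ne_zero,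
    integrable_withDensity_iff (measurable_gaussianPDF _ _)
      (ae_of_all _ fun x => ENNReal.ofReal_lt_top)]
  have htr : ∀ x : ℝ, (gaussianPDF m 1 x).toReal = gaussianPDFReal m 1 x := fun x =>
    ENNReal.toReal_ofReal (gaussianPDFReal_nonneg _ _ _)
  simp only [htr]
  set C : ℝ := (√(2 * π * ((1:ℝ≥0) : ℝ)))⁻¹ with hC
  have hC0 : 0 ≤ C := by positivity
  have h2 : Integrable (fun x : ℝ => |x + m| * (C * rexp (-x ^ 2 / (2 * ((1:ℝ≥0) : ℝ))))) volume := by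
    have hb : (0:ℝ) < 1/2 := by norm_num
    have hI1 : Integrable (fun x : ℝ => |x * rexp (-(1/2) * x ^ 2)|) volume :=
      (integrable_mul_exp_neg_mul_sq hb).abs
    have hI2 : Integrable (fun x : ℝ => rexp (-(1/2) * x ^ 2)) volume :=
      integrable_exp_neg_mul_sq hb
    have hgint : Integrable
        (fun x : ℝ => C * (|x * rexp (-(1/2) * x ^ 2)| + |m| * rexp (-(1/2) * x ^ 2))) volume :=
      (hI1.add (hI2.const_mul _)).const_mul _
    refine hgint.mono' ?_ (ae_of_all _ fun x => ?_)
    · exact (by fun_prop : Continuous fun x : ℝ =>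
        |x + m| * (C * rexp (-x ^ 2 / (2 * ((1:ℝ≥0) : ℝ))))).aestronglyMeasurable
    · have hexp : rexp (-x ^ 2 / (2 * ((1:ℝ≥0) : ℝ))) = rexp (-(1/2) * x ^ 2) := by
        congr 1
        push_cast
        ring
      have habs : |x + m| ≤ |x| + |m| := abs_add_le x m
      have he0 : (0:ℝ) < rexp (-(1/2) * x ^ 2) := Real.exp_pos _
      rw [Real.norm_eq_abs, abs_of_nonneg (by positivity), hexp]
      rw [abs_mul, abs_of_nonneg he0.le]
      calc |x + m| * (C * rexp (-(1/2) * x ^ 2))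
          ≤ (|x| + |m|) * (C * rexp (-(1/2) * x ^ 2)) :=
            mul_le_mul_of_nonneg_right habs (by positivity)
        _ = C * (|x| * rexp (-(1/2) * x ^ 2) + |m| * rexp (-(1/2) * x ^ 2)) := by ring
  have h3 := h2.comp_sub_right m
  have heq : (fun x : ℝ => |x| * gaussianPDFReal m 1 x)
      = fun x : ℝ => |x - m + m| * (C * rexp (-(x - m) ^ 2 / (2 * ((1:ℝ≥0) : ℝ)))) := by
    funext x
    rw [gaussianPDFReal]
    have : x - m + m = x := by ring
    rw [this]
  rw [heq]
  exact h3

lemma flip_map_eq {p : ℝ} (y : ℝ) :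
    (flipM p).map (fun s => s * y)
      = ENNReal.ofReal p • Measure.dirac y + ENNReal.ofReal (1 - p) • Measure.dirac (-y) := by
  have hm : Measurable fun s : ℝ => s * y := measurable_id.mul_const y
  rw [flipM, Measure.map_add _ _ hm, Measure.map_smul, Measure.map_smul,
    Measure.map_dirac' hm, Measure.map_dirac' hm]
  norm_num

lemma integrable_abs_fst {p η : ℝ} {d : ℕ} (y : ℝ) (hp0 : 0 ≤ p) (hp1 : p ≤ 1) :
    Integrable (fun x : ℝ × (Fin d → ℝ) => |x.1|) (muY p η d y) := by
  have hρ : Integrable (fun t : ℝ => |t|) ((flipM p).map (fun s => s * y)) := by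
    rw [flip_map_eq y]
    refine integrable_add_measure.2 ⟨?_, ?_⟩ <;>
      exact (integrable_dirac'' measurable_abs _).smul_measure ENNReal.ofReal_ne_top
  have hmap : (muY p η d y).map Prod.fst = (flipM p).map (fun s => s * y) := by
    rw [muY, Measure.map_fst_prod, measure_univ, one_smul]
  rw [← hmap] at hρ
  exact (integrable_map_measure (continuous_abs.aestronglyMeasurable)
    measurable_fst.aemeasurable).1 hρ

lemma integrable_abs_coord {p η : ℝ} {d : ℕ} (y : ℝ) (hp0 : 0 ≤ p) (hp1 : p ≤ 1) (k : Fin d) :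
    Integrable (fun x : ℝ × (Fin d → ℝ) => |x.2 k|) (muY p η d y) := by
  have := isProb_flipM hp0 hp1
  have h2 : IsProbabilityMeasure ((flipM p).map (fun s => s * y)) :=
    Measure.isProbabilityMeasure_map (measurable_id.mul_const y).aemeasurable
  have hpi : Integrable (fun v : Fin d → ℝ => |v k|)
      (Measure.pi fun _ : Fin d => gaussianReal (η * y) 1) := by
    have hmap := pi_map_eval (fun _ : Fin d => gaussianReal (η * y) 1) k
    have hI := integrable_abs_gaussianReal (η * y)
    rw [← hmap] at hI
    exact (integrable_map_measure (continuous_abs.aestronglyMeasurable)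
      (measurable_pi_apply k).aemeasurable).1 hI
  have hmap : (muY p η d y).map Prod.snd
      = Measure.pi fun _ : Fin d => gaussianReal (η * y) 1 := by
    rw [muY, Measure.map_snd_prod, measure_univ, one_smul]
  rw [← hmap] at hpi
  exact (integrable_map_measure
    ((continuous_abs.comp (continuous_apply k)).aestronglyMeasurable)
    measurable_snd.aemeasurable).1 hpi

lemma integrable_hinge {p η : ℝ} {d : ℕ} (hp0 : 0 ≤ p) (hp1 : p ≤ 1) (y c : ℝ) (b : Fin d → ℝ) :
    Integrable (fun x : ℝ × (Fin d → ℝ) =>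
      max 0 (1 - y * (c * x.1 + ∑ k, b k * x.2 k))) (muY p η d y) := by
  have := isProb_muY (p := p) η (d := d) y hp0 hp1
  have hg : Integrable (fun x : ℝ × (Fin d → ℝ) =>
      1 + |y * c| * |x.1| + ∑ k, |y * b k| * |x.2 k|) (muY p η d y) := by
    refine ((integrable_const 1).add
      ((integrable_abs_fst y hp0 hp1).const_mul _)).add
      (integrable_finset_sum _ fun k _ => (integrable_abs_coord y hp0 hp1 k).const_mul _)
  refine hg.mono' ?_ (ae_of_all _ fun x => ?_)
  · exact (by fun_prop : Continuous fun x : ℝ × (Fin d → ℝ) =>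
      max 0 (1 - y * (c * x.1 + ∑ k, b k * x.2 k))).aestronglyMeasurable
  · set t : ℝ := 1 - y * (c * x.1 + ∑ k, b k * x.2 k) with ht
    have h1 : ‖max 0 t‖ ≤ |t| := by
      rw [Real.norm_eq_abs, abs_of_nonneg (le_max_left 0 t)]
      exact max_le (abs_nonneg t) (le_abs_self t)
    have h2 : |t| ≤ 1 + |y * (c * x.1 + ∑ k, b k * x.2 k)| := by
      rw [ht, sub_eq_add_neg]
      calc |1 + -(y * (c * x.1 + ∑ k, b k * x.2 k))|
          ≤ |(1:ℝ)| + |-(y * (c * x.1 + ∑ k, b k * x.2 k))| := abs_add_le _ _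
        _ = 1 + |y * (c * x.1 + ∑ k, b k * x.2 k)| := by rw [abs_one, abs_neg]
    have h3 : |y * (c * x.1 + ∑ k, b k * x.2 k)|
        ≤ |y * c| * |x.1| + ∑ k, |y * b k| * |x.2 k| := by
      have : y * (c * x.1 + ∑ k, b k * x.2 k)
          = y * c * x.1 + ∑ k, y * b k * x.2 k := by
        rw [mul_add, Finset.mul_sum]
        ring_nf
      rw [this]
      calc |y * c * x.1 + ∑ k, y * b k * x.2 k|
          ≤ |y * c * x.1| + |∑ k, y * b k * x.2 k| := abs_add_le _ _
        _ ≤ |y * c| * |x.1| + ∑ k, |y * b k| * |x.2 k| := by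
            refine add_le_add (le_of_eq (abs_mul _ _)) ?_
            refine (Finset.abs_sum_le_sum_abs _ _).trans ?_
            refine le_of_eq (Finset.sum_congr rfl fun k _ => abs_mul _ _)
    linarith

lemma integrable_dataD {p η : ℝ} {d : ℕ} {f : (ℝ × (Fin d → ℝ)) × ℝ → ℝ}
    (hf : Continuous f)
    (h1 : Integrable (fun x => f (x, -1)) (muY p η d (-1)))
    (h2 : Integrable (fun x => f (x, 1)) (muY p η d 1)) :
    Integrable f (dataD p η d) := by
  rw [dataD_eq]
  refine integrable_add_measure.2 ⟨?_, ?_⟩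
  · refine Integrable.smul_measure ?_ (by norm_num)
    exact (integrable_map_measure hf.aestronglyMeasurable
      (measurable_id.prodMk measurable_const).aemeasurable).2 h1
  · refine Integrable.smul_measure ?_ (by norm_num)
    exact (integrable_map_measure hf.aestronglyMeasurable
      (measurable_id.prodMk measurable_const).aemeasurable).2 h2

lemma integral_dataD {p η : ℝ} {d : ℕ} {f : (ℝ × (Fin d → ℝ)) × ℝ → ℝ}
    (hf : Continuous f)
    (h1 : Integrable (fun x => f (x, -1)) (muY p η d (-1)))
    (h2 : Integrable (fun x => f (x, 1)) (muY p η d 1)) :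
    ∫ ω, f ω ∂(dataD p η d)
      = (1/2 : ℝ) * ∫ x, f (x, -1) ∂(muY p η d (-1))
        + (1/2 : ℝ) * ∫ x, f (x, 1) ∂(muY p η d 1) := by
  have i1 : Integrable f ((1/2 : ℝ≥0∞) • nuY p η d (-1)) := by
    refine Integrable.smul_measure ?_ (by norm_num)
    exact (integrable_map_measure hf.aestronglyMeasurable
      (measurable_id.prodMk measurable_const).aemeasurable).2 h1
  have i2 : Integrable f ((1/2 : ℝ≥0∞) • nuY p η d 1) := by
    refine Integrable.smul_measure ?_ (by norm_num)
    exact (integrable_map_measure hf.aestronglyMeasurable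
      (measurable_id.prodMk measurable_const).aemeasurable).2 h2
  rw [dataD_eq, integral_add_measure i1 i2, integral_smul_measure, integral_smul_measure]
  rw [nuY, nuY, integral_map measurable_prodMk_right.aemeasurable
      hf.aestronglyMeasurable,
    integral_map measurable_prodMk_right.aemeasurable
      hf.aestronglyMeasurable]
  have hh : ((1/2 : ℝ≥0∞)).toReal = (1/2 : ℝ) := by simp
  rw [hh]
  simp [smul_eq_mul]

lemma integral_swap_muY {p η : ℝ} {d : ℕ} (hp0 : 0 ≤ p) (hp1 : p ≤ 1) (y : ℝ)
    (σ : Equiv.Perm (Fin d)) (g : ℝ × (Fin d → ℝ) → ℝ) :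
    ∫ x, g (x.1, fun k => x.2 (σ k)) ∂(muY p η d y) = ∫ x, g x ∂(muY p η d y) := by
  set pe : ((Fin d) → ℝ) ≃ᵐ ((Fin d) → ℝ) :=
    MeasurableEquiv.piCongrLeft (fun _ : Fin d => ℝ) σ.symm with hpe
  have hpemp : MeasurePreserving pe
      (Measure.pi fun _ : Fin d => gaussianReal (η * y) 1)
      (Measure.pi fun _ : Fin d => gaussianReal (η * y) 1) :=
    measurePreserving_piCongrLeft (fun _ : Fin d => gaussianReal (η * y) 1) σ.symm
  have hpeapp : ∀ (v : Fin d → ℝ) (k : Fin d), pe v k = v (σ k) := by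
    intro v k
    have := MeasurableEquiv.piCongrLeft_apply_apply σ.symm (β := fun _ : Fin d => ℝ) v (σ k)
    simpa using this
  set E : (ℝ × (Fin d → ℝ)) ≃ᵐ (ℝ × (Fin d → ℝ)) :=
    (MeasurableEquiv.refl ℝ).prodCongr pe with hE
  have hEmp : MeasurePreserving E (muY p η d y) (muY p η d y) := by
    have hρ := isProb_flipM hp0 hp1
    have hρ2 : IsProbabilityMeasure ((flipM p).map (fun s => s * y)) :=
      Measure.isProbabilityMeasure_map (measurable_id.mul_const y).aemeasurable
    have := (MeasurePreserving.id ((flipM p).map (fun s => s * y))).prod hpemp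
    convert this using 1
    all_goals rfl
  have hEapp : ∀ x : ℝ × (Fin d → ℝ), E x = (x.1, fun k => x.2 (σ k)) := by
    intro x
    ext
    · rfl
    · exact hpeapp x.2 _
  calc ∫ x, g (x.1, fun k => x.2 (σ k)) ∂(muY p η d y)
      = ∫ x, g (E x) ∂(muY p η d y) := by
        refine integral_congr_ae (ae_of_all _ fun x => ?_)
        exact (congrArg g (hEapp x)).symm
    _ = ∫ x, g x ∂(muY p η d y) := hEmp.integral_comp' g

lemma hinge_mid (s t : ℝ) : max 0 ((s + t) / 2) ≤ (max 0 s + max 0 t) / 2 := by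
  refine max_le ?_ ?_
  · have h1 := le_max_left (0:ℝ) s
    have h2 := le_max_left (0:ℝ) t
    linarith
  · have h1 := le_max_right (0:ℝ) s
    have h2 := le_max_right (0:ℝ) t
    linarith

/-- The soft-margin SVM objective E[max(0, 1 - y wᵀx)] + (λ/2)‖w‖₂² over D,
with weights w = (w₁, (w₂,…,w_{d+1})). -/
noncomputable def svmObj (p η : ℝ) (d : ℕ) (lam : ℝ) (w : ℝ × (Fin d → ℝ)) : ℝ :=
  (∫ ω, max 0 (1 - ω.2 * (w.1 * ω.1.1 + ∑ i, w.2 i * ω.1.2 i)) ∂(dataD p η d))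
    + lam / 2 * (w.1 ^ 2 + ∑ i, (w.2 i) ^ 2)

/-- Any optimal solution of the soft-margin SVM objective over D assigns equal
weight to all the features x₂, …, x_{d+1}. -/
theorem svm_optimal_symmetric (p η lam : ℝ) (d : ℕ)
    (hp : 1/2 ≤ p) (hp1 : p < 1) (hη : 0 < η) (hlam : 0 < lam)
    (w : ℝ × (Fin d → ℝ))
    (hopt : ∀ w' : ℝ × (Fin d → ℝ), svmObj p η d lam w ≤ svmObj p η d lam w') :
    ∀ i j : Fin d, w.2 i = w.2 j := by
  classical
  have hp0 : (0:ℝ) ≤ p := le_trans (by norm_num) hp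
  have hp1' : p ≤ 1 := hp1.le
  intro i j
  by_cases hij : i = j
  · rw [hij]
  set σ : Equiv.Perm (Fin d) := Equiv.swap i j with hσ
  set a : Fin d → ℝ := w.2 with ha
  set w' : ℝ × (Fin d → ℝ) := (w.1, fun k => a (σ k)) with hw'
  set mmid : ℝ × (Fin d → ℝ) := (w.1, fun k => (a k + a (σ k)) / 2) with hmm
  set F : (ℝ × (Fin d → ℝ)) → ((ℝ × (Fin d → ℝ)) × ℝ) → ℝ :=
    fun u ω => max 0 (1 - ω.2 * (u.1 * ω.1.1 + ∑ k, u.2 k * ω.1.2 k)) with hF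
  have hFc : ∀ u, Continuous (F u) := fun u => by
    rw [hF]
    fun_prop
  have hFyint : ∀ (u : ℝ × (Fin d → ℝ)) (y : ℝ),
      Integrable (fun x => F u (x, y)) (muY p η d y) := by
    intro u y
    exact integrable_hinge (η := η) hp0 hp1' y u.1 u.2
  have hint : ∀ u, Integrable (F u) (dataD p η d) :=
    fun u => integrable_dataD (hFc u) (hFyint u _) (hFyint u _)
  have hIform : ∀ u, ∫ ω, F u ω ∂(dataD p η d)
      = (1/2 : ℝ) * ∫ x, F u (x, -1) ∂(muY p η d (-1))
        + (1/2 : ℝ) * ∫ x, F u (x, 1) ∂(muY p η d 1) :=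
    fun u => integral_dataD (hFc u) (hFyint u _) (hFyint u _)
  have hswap : ∫ ω, F w' ω ∂(dataD p η d) = ∫ ω, F w ω ∂(dataD p η d) := by
    have hy : ∀ y : ℝ, ∫ x, F w' (x, y) ∂(muY p η d y)
        = ∫ x, F w (x, y) ∂(muY p η d y) := by
      intro y
      have h1 : ∀ x : ℝ × (Fin d → ℝ),
          F w' (x, y) = (fun z : ℝ × (Fin d → ℝ) => F w (z, y)) (x.1, fun k => x.2 (σ k)) := by
        intro x
        have hsum : ∑ k, a (σ k) * x.2 k = ∑ k, a k * x.2 (σ k) := by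
          have h := Equiv.sum_comp σ (fun k => a k * x.2 (σ k))
          simpa [hσ, Equiv.swap_apply_self] using h
        simp only [hF, hw']
        rw [hsum]
      calc ∫ x, F w' (x, y) ∂(muY p η d y)
          = ∫ x, (fun z : ℝ × (Fin d → ℝ) => F w (z, y)) (x.1, fun k => x.2 (σ k))
              ∂(muY p η d y) := integral_congr_ae (ae_of_all _ h1)
        _ = ∫ x, F w (x, y) ∂(muY p η d y) :=
            integral_swap_muY hp0 hp1' y σ (fun z => F w (z, y))
    rw [hIform w', hIform w, hy, hy]
  have hmidpt : ∀ ω, F mmid ω ≤ (F w ω + F w' ω) / 2 := by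
    intro ω
    simp only [hF, hmm, hw']
    have hsum : ∑ k, ((a k + a (σ k)) / 2) * ω.1.2 k
        = (∑ k, a k * ω.1.2 k + ∑ k, a (σ k) * ω.1.2 k) / 2 := by
      rw [← Finset.sum_add_distrib, Finset.sum_div]
      exact Finset.sum_congr rfl fun k _ => by ring
    have hlin : (1 : ℝ) - ω.2 * (w.1 * ω.1.1 + ∑ k, ((a k + a (σ k)) / 2) * ω.1.2 k)
        = ((1 - ω.2 * (w.1 * ω.1.1 + ∑ k, a k * ω.1.2 k))
            + (1 - ω.2 * (w.1 * ω.1.1 + ∑ k, a (σ k) * ω.1.2 k))) / 2 := by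
      rw [hsum]
      ring
    rw [hlin]
    exact hinge_mid _ _
  have hImid : ∫ ω, F mmid ω ∂(dataD p η d) ≤ ∫ ω, F w ω ∂(dataD p η d) := by
    have hle : ∫ ω, F mmid ω ∂(dataD p η d)
        ≤ ∫ ω, (F w ω + F w' ω) / 2 ∂(dataD p η d) :=
      integral_mono (hint mmid) (((hint w).add (hint w')).div_const 2) hmidpt
    rwa [integral_div, integral_add (hint w) (hint w'), hswap, add_self_div_two] at hle
  have hsvm : ∀ u : ℝ × (Fin d → ℝ),
      svmObj p η d lam u = ∫ ω, F u ω ∂(dataD p η d)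
        + lam / 2 * (u.1 ^ 2 + ∑ k, (u.2 k) ^ 2) := fun u => rfl
  have hobj := hopt mmid
  rw [hsvm w, hsvm mmid] at hobj
  have hSm : ∑ k, (mmid.2 k) ^ 2 = ∑ k, (a k) ^ 2 - (a i - a j) ^ 2 / 2 := by
    have hsplit1 := Finset.sum_sdiff (Finset.subset_univ ({i, j} : Finset (Fin d)))
      (f := fun k => ((a k + a (σ k)) / 2) ^ 2)
    have hsplit2 := Finset.sum_sdiff (Finset.subset_univ ({i, j} : Finset (Fin d)))
      (f := fun k => (a k) ^ 2)
    have hoff : ∑ k ∈ Finset.univ \ ({i, j} : Finset (Fin d)), ((a k + a (σ k)) / 2) ^ 2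
        = ∑ k ∈ Finset.univ \ ({i, j} : Finset (Fin d)), (a k) ^ 2 := by
      refine Finset.sum_congr rfl fun k hk => ?_
      simp only [Finset.mem_sdiff, Finset.mem_insert, Finset.mem_singleton] at hk
      push_neg at hk
      rw [hσ, Equiv.swap_apply_of_ne_of_ne hk.2.1 hk.2.2]
      ring
    have hpair1 : ∑ k ∈ ({i, j} : Finset (Fin d)), ((a k + a (σ k)) / 2) ^ 2
        = ((a i + a j) / 2) ^ 2 + ((a j + a i) / 2) ^ 2 := by
      rw [Finset.sum_pair hij, hσ, Equiv.swap_apply_left, Equiv.swap_apply_right]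
    have hpair2 : ∑ k ∈ ({i, j} : Finset (Fin d)), (a k) ^ 2 = (a i) ^ 2 + (a j) ^ 2 :=
      Finset.sum_pair hij
    have hring : ((a i + a j) / 2) ^ 2 + ((a j + a i) / 2) ^ 2
        = (a i) ^ 2 + (a j) ^ 2 - (a i - a j) ^ 2 / 2 := by ring
    have hmm2 : ∀ k, mmid.2 k = (a k + a (σ k)) / 2 := fun k => rfl
    simp only [hmm2]
    linarith [hsplit1, hsplit2]
  have hfst : mmid.1 = w.1 := rfl
  rw [hSm, hfst] at hobj
  have hq : (a i - a j) ^ 2 ≤ 0 := by nlinarith [hImid, hobj]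
  have hq0 : (a i - a j) ^ 2 = 0 := le_antisymm hq (sq_nonneg _)
  have : a i - a j = 0 := by
    have := pow_eq_zero_iff (n := 2) (by norm_num) |>.1 hq0
    exact this
  linarith
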